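/- Let Z be a finite nonempty set and let (z_t)_{t=1}^{T} be a sequence in Z with T ≥ 1. Let 1 = t₁ < t₂ < ⋯ < t_{m+1} = T + 1 be episode start times, and for each episode k ∈ {1,…,m} and each z ∈ Z define N_k(z) := |{t < t_k : z_t = z}| and ν_k(z) := |{t : t_k ≤ t < t_{k+1}, z_t = z}|. Assume that ν_k(z) ≤ max{1, N_k(z)} for every k and z. Then ∑_{k=1}^{m} ∑_{z∈Z} ν_k(z)/(N_k(z) + 1) ≤ 2·|Z|·(1 + ln T). -/

import Mathlib

/-- Key per-term inequality: if `b ≤ a + 1` then `b/(a+1) ≤ 2*(log (a+b+1) - log (a+1))`. -/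
lemma key_ineq (a b : ℕ) (h : b ≤ a + 1) :
    (b : ℝ) / (a + 1) ≤ 2 * (Real.log (a + b + 1) - Real.log (a + 1)) := by
  set x : ℝ := (a : ℝ) + 1 with hx
  have hx0 : 0 < x := by positivity
  have hy0 : (0 : ℝ) ≤ (b : ℝ) := by positivity
  have hyx : (b : ℝ) ≤ x := by
    rw [hx]; exact_mod_cast h
  have hxy0 : 0 < x + b := by positivity
  have habs : (a : ℝ) + b + 1 = x + b := by rw [hx]; ring
  rw [habs]
  have hlog : (b : ℝ) / (x + b) ≤ Real.log (x + b) - Real.log x := by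
    have h1 : Real.log (x / (x + b)) ≤ x / (x + b) - 1 :=
      Real.log_le_sub_one_of_pos (by positivity)
    have h2 : Real.log (x / (x + b)) = Real.log x - Real.log (x + b) :=
      Real.log_div (ne_of_gt hx0) (ne_of_gt hxy0)
    have h3 : x / (x + b) - 1 = -((b : ℝ) / (x + b)) := by
      field_simp
      ring
    rw [h2, h3] at h1
    linarith
  have h4 : (b : ℝ) / x ≤ 2 * ((b : ℝ) / (x + b)) := by
    rw [mul_div_assoc', div_le_div_iff₀ hx0 hxy0]
    nlinarith
  linarith

lemma tele_Icc (g : ℕ → ℝ) (m : ℕ) :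
    ∑ k ∈ Finset.Icc 1 m, (g (k + 1) - g k) = g (m + 1) - g 1 := by
  induction m with
  | zero => simp
  | succ n ih => rw [Finset.sum_Icc_succ_top (by omega), ih]; ring

theorem stmt_16 {Z : Type*} [Fintype Z] [Nonempty Z] [DecidableEq Z]
    (T : ℕ) (hT : 1 ≤ T) (z : ℕ → Z)
    (m : ℕ) (t : ℕ → ℕ) (ht1 : t 1 = 1) (htm : t (m + 1) = T + 1)
    (hmono : ∀ k, 1 ≤ k → k ≤ m → t k < t (k + 1))
    (N ν : ℕ → Z → ℕ)
    (hN : ∀ k zz, N k zz = ((Finset.Ico 1 (t k)).filter fun s => z s = zz).card)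
    (hν : ∀ k zz, ν k zz = ((Finset.Ico (t k) (t (k + 1))).filter fun s => z s = zz).card)
    (hdbl : ∀ k zz, 1 ≤ k → k ≤ m → ν k zz ≤ max 1 (N k zz)) :
    ∑ k ∈ Finset.Icc 1 m, ∑ zz : Z, (ν k zz : ℝ) / (N k zz + 1) ≤
      2 * Fintype.card Z * (1 + Real.log T) := by
  -- t k ≥ 1 for 1 ≤ k ≤ m+1
  have htpos : ∀ k, 1 ≤ k → k ≤ m + 1 → 1 ≤ t k := by
    intro k hk1 hk2
    induction k with
    | zero => omega
    | succ n ih =>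
      rcases Nat.eq_or_lt_of_le hk1 with h | h
      · rw [← h]; omega
      · have hn1 : 1 ≤ n := by omega
        have hnm : n ≤ m := by omega
        have := hmono n hn1 hnm
        have := ih hn1 (by omega)
        omega
  -- recursion
  have hrec : ∀ k, 1 ≤ k → k ≤ m → ∀ zz, N (k + 1) zz = N k zz + ν k zz := by
    intro k hk1 hkm zz
    rw [hN, hN, hν]
    have h1 : 1 ≤ t k := htpos k hk1 (by omega)
    have h2 : t k ≤ t (k + 1) := le_of_lt (hmono k hk1 hkm)
    rw [← Finset.Ico_union_Ico_eq_Ico h1 h2, Finset.filter_union,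
      Finset.card_union_of_disjoint]
    exact Finset.disjoint_filter_filter (Finset.Ico_disjoint_Ico_consecutive 1 (t k) (t (k+1)))
  have hN1 : ∀ zz, N 1 zz = 0 := by
    intro zz; rw [hN, ht1]; simp
  have hNlast : ∀ zz, N (m + 1) zz ≤ T := by
    intro zz
    rw [hN, htm]
    calc ((Finset.Ico 1 (T + 1)).filter fun s => z s = zz).card
        ≤ (Finset.Ico 1 (T + 1)).card := Finset.card_filter_le _ _
      _ = T := by rw [Nat.card_Ico]; omega
  have hT0 : (0 : ℝ) < T := by exact_mod_cast hT
  -- bound per z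
  have hperz : ∀ zz : Z,
      ∑ k ∈ Finset.Icc 1 m, (ν k zz : ℝ) / (N k zz + 1) ≤ 2 * (1 + Real.log T) := by
    intro zz
    have hstep : ∀ k ∈ Finset.Icc 1 m,
        (ν k zz : ℝ) / (N k zz + 1) ≤
          2 * (Real.log ((N (k+1) zz : ℝ) + 1) - Real.log ((N k zz : ℝ) + 1)) := by
      intro k hk
      rw [Finset.mem_Icc] at hk
      have hle : ν k zz ≤ N k zz + 1 :=
        le_trans (hdbl k zz hk.1 hk.2) (by omega)
      have := key_ineq (N k zz) (ν k zz) hle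
      have hr : ((N (k+1) zz : ℝ) + 1) = (N k zz : ℝ) + ν k zz + 1 := by
        rw [hrec k hk.1 hk.2 zz]; push_cast; ring
      rw [hr]
      exact this
    calc ∑ k ∈ Finset.Icc 1 m, (ν k zz : ℝ) / (N k zz + 1)
        ≤ ∑ k ∈ Finset.Icc 1 m,
            2 * (Real.log ((N (k+1) zz : ℝ) + 1) - Real.log ((N k zz : ℝ) + 1)) :=
          Finset.sum_le_sum hstep
      _ = 2 * (Real.log ((N (m+1) zz : ℝ) + 1) - Real.log ((N 1 zz : ℝ) + 1)) := by
          rw [← Finset.mul_sum, tele_Icc (fun k => Real.log ((N k zz : ℝ) + 1)) m]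
      _ ≤ 2 * (1 + Real.log T) := by
          rw [hN1 zz]
          simp only [Nat.cast_zero, zero_add, Real.log_one, sub_zero]
          have h1 : ((N (m+1) zz : ℝ) + 1) ≤ (T : ℝ) + 1 := by
            have := hNlast zz; push_cast; exact_mod_cast by exact_mod_cast Nat.add_le_add_right this 1
          have h2 : Real.log ((N (m+1) zz : ℝ) + 1) ≤ Real.log ((T : ℝ) + 1) :=
            Real.log_le_log (by positivity) h1
          have h3 : (T : ℝ) + 1 ≤ Real.exp 1 * T := by
            have he : (2 : ℝ) ≤ Real.exp 1 := by
              have := Real.add_one_le_exp (1 : ℝ); linarith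
            have hT1 : (1 : ℝ) ≤ T := by exact_mod_cast hT
            nlinarith
          have h4 : Real.log ((T : ℝ) + 1) ≤ Real.log (Real.exp 1 * T) :=
            Real.log_le_log (by positivity) h3
          rw [Real.log_mul (Real.exp_ne_zero 1) (ne_of_gt hT0), Real.log_exp] at h4
          linarith
    done
  calc ∑ k ∈ Finset.Icc 1 m, ∑ zz : Z, (ν k zz : ℝ) / (N k zz + 1)
      = ∑ zz : Z, ∑ k ∈ Finset.Icc 1 m, (ν k zz : ℝ) / (N k zz + 1) := Finset.sum_comm
    _ ≤ ∑ _zz : Z, 2 * (1 + Real.log T) := Finset.sum_le_sum fun zz _ => hperz zz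
    _ = 2 * Fintype.card Z * (1 + Real.log T) := by
        rw [Finset.sum_const, Finset.card_univ, nsmul_eq_mul]; ring
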